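/- arXiv:2002.00624 — 2 statements merged into one kernel-verified Lean document; each statement's English description precedes it below -/
import Mathlib

section
/- Conversely, every complex symmetric d×d matrix C with positive definite imaginary part can be written as C = P Q^{-1} with complex matrices Q, P satisfying Q^T P − P^T Q = 0 and Q^* P − P^* Q = 2i·Id; one may take Q = (Im C)^{-1/2} and P = C Q. -/
open Matrix

section
open scoped ComplexOrder
noncomputable def Matrix.PosSemidef.sqrt {n : Type*} [Fintype n] [DecidableEq n]
    {𝕜 : Type*} [RCLike 𝕜] {A : Matrix n n 𝕜} (hA : A.PosSemidef) : Matrix n n 𝕜 :=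
  hA.1.eigenvectorUnitary.1 * diagonal ((↑) ∘ Real.sqrt ∘ hA.1.eigenvalues) *
    (star hA.1.eigenvectorUnitary : Matrix n n 𝕜)
end
lemma psd_sqrt_mul_self {n : Type*} [Fintype n] [DecidableEq n] {A : Matrix n n ℝ}
    (hA : A.PosSemidef) : hA.sqrt * hA.sqrt = A := by
  have hU : (star hA.1.eigenvectorUnitary : Matrix n n ℝ) * hA.1.eigenvectorUnitary.1 = 1 :=
    Unitary.coe_star_mul_self _
  have hD : diagonal ((↑) ∘ Real.sqrt ∘ hA.1.eigenvalues) *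
      diagonal ((↑) ∘ Real.sqrt ∘ hA.1.eigenvalues) =
      diagonal (RCLike.ofReal ∘ hA.1.eigenvalues : n → ℝ) := by
    rw [diagonal_mul_diagonal]
    congr 1; funext i
    simp [Real.mul_self_sqrt (hA.eigenvalues_nonneg i)]
  conv_rhs => rw [hA.1.spectral_theorem, Unitary.conjStarAlgAut_apply]
  unfold Matrix.PosSemidef.sqrt
  calc _ = hA.1.eigenvectorUnitary.1 * diagonal ((↑) ∘ Real.sqrt ∘ hA.1.eigenvalues) *
      ((star hA.1.eigenvectorUnitary : Matrix n n ℝ) * hA.1.eigenvectorUnitary.1) *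
      diagonal ((↑) ∘ Real.sqrt ∘ hA.1.eigenvalues) *
      (star hA.1.eigenvectorUnitary : Matrix n n ℝ) := by simp only [mul_assoc]; rfl
    _ = _ := by rw [hU, mul_one, mul_assoc _ (diagonal _) (diagonal _), hD]

lemma psd_sqrt_herm {n : Type*} [Fintype n] [DecidableEq n] {A : Matrix n n ℝ}
    (hA : A.PosSemidef) : hA.sqrt.IsHermitian := by
  unfold Matrix.PosSemidef.sqrt IsHermitian
  rw [conjTranspose_mul, conjTranspose_mul, diagonal_conjTranspose, mul_assoc,
    ← star_eq_conjTranspose, ← star_eq_conjTranspose, star_star]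
  congr 2

lemma real_conjTranspose_eq_transpose {n : Type*} (M : Matrix n n ℝ) : Mᴴ = Mᵀ := by
  ext i j; simp [conjTranspose_apply]

/-- every complex symmetric matrix `C` with positive definite imaginary
part can be written as `C = P * Q⁻¹` with `Q, P` satisfying Hagedorn's symplecticity
relations; one may take `Q = (Im C)^{-1/2}` and `P = C * Q`. -/
theorem stmt1 (d : ℕ) (C : Matrix (Fin d) (Fin d) ℂ)
    (hsym : Cᵀ = C) (hpos : (C.map Complex.im).PosDef) :
    ∃ Q P : Matrix (Fin d) (Fin d) ℂ,
      Qᵀ * P - Pᵀ * Q = 0 ∧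
      Qᴴ * P - Pᴴ * Q = (2 * Complex.I) • (1 : Matrix (Fin d) (Fin d) ℂ) ∧
      C = P * Q⁻¹ ∧
      Q = ((hpos.posSemidef.sqrt)⁻¹).map (fun r => (r : ℂ)) ∧
      P = C * Q := by
  set S : Matrix (Fin d) (Fin d) ℝ := hpos.posSemidef.sqrt with hSdef
  have hS2 : S * S = C.map Complex.im := psd_sqrt_mul_self hpos.posSemidef
  have hSsym : Sᵀ = S := by
    rw [← real_conjTranspose_eq_transpose]
    exact psd_sqrt_herm hpos.posSemidef
  have hdet : S.det ≠ 0 := by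
    intro h
    have : (C.map Complex.im).det = 0 := by rw [← hS2, det_mul, h, mul_zero]
    exact (ne_of_gt hpos.det_pos) this
  have hSinv : S * S⁻¹ = 1 := mul_nonsing_inv S (Ne.isUnit hdet)
  have hSinv' : S⁻¹ * S = 1 := nonsing_inv_mul S (Ne.isUnit hdet)
  have hSinvSym : (S⁻¹)ᵀ = S⁻¹ := by rw [transpose_nonsing_inv, hSsym]
  set f : ℝ →+* ℂ := Complex.ofRealHom with hf
  set Q : Matrix (Fin d) (Fin d) ℂ := (S⁻¹).map f with hQ
  have hQeq : Q = ((hpos.posSemidef.sqrt)⁻¹).map (fun r => (r : ℂ)) := rfl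
  set P : Matrix (Fin d) (Fin d) ℂ := C * Q with hP
  have hQT : Qᵀ = Q := by rw [hQ, ← Matrix.transpose_map, hSinvSym]
  have hQH : Qᴴ = Q := by
    have h1 : Qᴴ = Qᵀ := by
      rw [hQ]; ext i j
      simp [conjTranspose_apply, Matrix.map_apply, transpose_apply, hf]
    rw [h1, hQT]
  have hQdet : Q.det ≠ 0 := by
    have h1 : Q.det = ((S⁻¹).det : ℂ) := by
      rw [hQ, ← RingHom.mapMatrix_apply, ← RingHom.map_det]; rfl
    rw [h1]
    have : (S⁻¹).det ≠ 0 := by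
      rw [det_nonsing_inv]
      simpa [Ring.inverse_eq_inv'] using inv_ne_zero hdet
    exact_mod_cast this
  have hkey : Q * ((C.map Complex.im).map f) * Q = 1 := by
    rw [hQ, ← hS2, ← Matrix.map_mul, ← Matrix.map_mul]
    have h2 : S⁻¹ * (S * S) * S⁻¹ = 1 := by
      rw [← mul_assoc, hSinv', one_mul, hSinv]
    rw [h2, Matrix.map_one f f.map_zero f.map_one]
  have hCH : Cᴴ = C.map (starRingEnd ℂ) := by
    rw [conjTranspose, hsym]; rfl
  have hdiff : C - Cᴴ = (2 * Complex.I) • ((C.map Complex.im).map f) := by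
    rw [hCH]
    ext i j
    simp only [Matrix.sub_apply, Matrix.map_apply, Matrix.smul_apply, smul_eq_mul]
    rw [Complex.sub_conj]
    simp only [hf, Complex.ofRealHom_eq_coe]
    push_cast
    ring
  refine ⟨Q, P, ?_, ?_, ?_, hQeq, rfl⟩
  · rw [hP, Matrix.transpose_mul, hQT, hsym, ← mul_assoc, sub_self]
  · have h3 : Qᴴ * P - Pᴴ * Q = Q * (C - Cᴴ) * Q := by
      rw [hP, Matrix.conjTranspose_mul, hQH, mul_sub, sub_mul, mul_assoc, mul_assoc]
    rw [h3, hdiff, Matrix.mul_smul, Matrix.smul_mul, hkey]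
  · rw [hP, mul_assoc, mul_nonsing_inv Q (Ne.isUnit hQdet), mul_one]
end

section
/- Let Z = [Q; P] ∈ ℂ^{2d×d} satisfy Z^T J^T Z = 0 and Z^* J^T Z = 2i·Id (i.e. Hagedorn's relations for Q, P). Then Im(Z Z^*) = J and Re(Z Z^*) is a real symmetric, positive definite, symplectic 2d×2d matrix. -/
open Matrix

private lemma mapmulR {m n p : Type*} [Fintype n] (A : Matrix m n ℝ) (B : Matrix n p ℝ) :
    (A * B).map Complex.ofReal = A.map Complex.ofReal * B.map Complex.ofReal := by
  ext i j
  simp [Matrix.mul_apply, Matrix.map_apply]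

/-- if `Z = [Q; P]` satisfies Hagedorn's relations
`Zᵀ Jᵀ Z = 0` and `Z^* Jᵀ Z = 2i·Id`, then `Im(Z Z^*) = J` and `Re(Z Z^*)` is a
real symmetric, positive definite, symplectic matrix. -/
theorem stmt15 (d : ℕ) (Z : Matrix (Fin d ⊕ Fin d) (Fin d) ℂ)
    (h1 : Zᵀ *
        (Matrix.fromBlocks 0 (-1) 1 0 :
          Matrix (Fin d ⊕ Fin d) (Fin d ⊕ Fin d) ℂ)ᵀ * Z
        = (0 : Matrix (Fin d) (Fin d) ℂ))
    (h2 : Zᴴ *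
        (Matrix.fromBlocks 0 (-1) 1 0 :
          Matrix (Fin d ⊕ Fin d) (Fin d ⊕ Fin d) ℂ)ᵀ * Z
        = (2 * Complex.I) • (1 : Matrix (Fin d) (Fin d) ℂ)) :
    ((Z * Zᴴ).map Complex.im)
        = (Matrix.fromBlocks 0 (-1) 1 0 :
            Matrix (Fin d ⊕ Fin d) (Fin d ⊕ Fin d) ℝ) ∧
    ((Z * Zᴴ).map Complex.re)ᵀ = (Z * Zᴴ).map Complex.re ∧
    ((Z * Zᴴ).map Complex.re).PosDef ∧
    ((Z * Zᴴ).map Complex.re)ᵀ *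
        (Matrix.fromBlocks 0 (-1) 1 0 :
          Matrix (Fin d ⊕ Fin d) (Fin d ⊕ Fin d) ℝ) *
        ((Z * Zᴴ).map Complex.re)
      = (Matrix.fromBlocks 0 (-1) 1 0 :
          Matrix (Fin d ⊕ Fin d) (Fin d ⊕ Fin d) ℝ) := by
  set Jc : Matrix (Fin d ⊕ Fin d) (Fin d ⊕ Fin d) ℂ :=
    Matrix.fromBlocks 0 (-1) 1 0 with hJcdef
  set Jr : Matrix (Fin d ⊕ Fin d) (Fin d ⊕ Fin d) ℝ :=
    Matrix.fromBlocks 0 (-1) 1 0 with hJrdef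
  have hJt : Jcᵀ = -Jc := by
    ext (i | i) (j | j) <;>
      simp [hJcdef, Matrix.fromBlocks, Matrix.transpose_apply, Matrix.one_apply, eq_comm]
  have hJJ : Jc * Jc = -1 := by
    rw [hJcdef, Matrix.fromBlocks_multiply]
    ext (i | i) (j | j) <;>
      simp [Matrix.fromBlocks, Matrix.one_apply]
  have hJmap : Jr.map Complex.ofReal = Jc := by
    ext (i | i) (j | j) <;>
      simp [hJcdef, hJrdef, Matrix.fromBlocks, Matrix.one_apply] <;>
      split <;> simp [Complex.ext_iff]
  have h1' : Zᵀ * Jc * Z = 0 := by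
    rw [hJt] at h1
    have : -(Zᵀ * Jc * Z) = 0 := by
      rw [← h1]; simp [Matrix.mul_neg, Matrix.neg_mul]
    exact neg_eq_zero.mp this
  have h2' : Zᴴ * Jc * Z = (-(2 * Complex.I)) • 1 := by
    rw [hJt] at h2
    have : -(Zᴴ * Jc * Z) = (2 * Complex.I) • 1 := by
      rw [← h2]; simp [Matrix.mul_neg, Matrix.neg_mul]
    rw [← neg_neg (Zᴴ * Jc * Z), this, neg_smul]
  -- conjugated relations
  set Zb : Matrix (Fin d ⊕ Fin d) (Fin d) ℂ := Z.map (starRingEnd ℂ) with hZbdef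
  have hZtmap : Zᵀ.map (starRingEnd ℂ) = Zᴴ := by
    ext i j
    simp only [Matrix.map_apply, Matrix.conjTranspose_apply, Matrix.transpose_apply]
    rfl
  have hZhmap : Zᴴ.map (starRingEnd ℂ) = Zᵀ := by
    ext i j
    simp only [Matrix.map_apply, Matrix.conjTranspose_apply, Matrix.transpose_apply]
    exact Complex.conj_conj _
  have hJcmapc : Jc.map (starRingEnd ℂ) = Jc := by
    ext (i | i) (j | j) <;>
      simp [hJcdef, Matrix.fromBlocks, Matrix.one_apply, apply_ite]
  have hc1 : Zᴴ * Jc * Zb = 0 := by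
    have h := congrArg (fun M : Matrix (Fin d) (Fin d) ℂ =>
      M.map (starRingEnd ℂ)) h1'
    simpa [Matrix.map_mul, hZtmap, hJcmapc, hZbdef] using h
  have hc2 : Zᵀ * Jc * Zb = (2 * Complex.I) • 1 := by
    have h := congrArg (fun M : Matrix (Fin d) (Fin d) ℂ =>
      M.map (starRingEnd ℂ)) h2'
    simp only [Matrix.map_mul, hZhmap, hJcmapc] at h
    rw [← hZbdef] at h
    rw [h]
    ext i j
    simp only [Matrix.map_apply, Matrix.smul_apply, Matrix.one_apply, smul_eq_mul,
      mul_ite, mul_zero, mul_one]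
    split <;> simp [Complex.ext_iff]
  -- the big 2d x 2d matrices
  set V : Matrix (Fin d ⊕ Fin d) (Fin d ⊕ Fin d) ℂ := Matrix.fromRows Zᴴ Zᵀ with hVdef
  set X : Matrix (Fin d ⊕ Fin d) (Fin d ⊕ Fin d) ℂ :=
    Jc * Matrix.fromCols Z Zb *
      Matrix.fromBlocks ((Complex.I / 2) • 1) 0 0 ((-(Complex.I / 2)) • 1) with hXdef
  have hVX : V * X = 1 := by
    rw [hVdef, hXdef, Matrix.mul_fromCols, Matrix.fromCols_mul_fromBlocks]
    simp only [Matrix.mul_zero, zero_add, add_zero, Matrix.mul_smul,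
      Matrix.mul_one]
    rw [Matrix.fromRows_mul_fromCols]
    simp only [Matrix.mul_smul, ← Matrix.mul_assoc, h2', hc1, hc2, h1',
      smul_zero, smul_smul]
    have e1 : Complex.I / 2 * -(2 * Complex.I) = 1 := by
      linear_combination -Complex.I_mul_I
    have e2 : -(Complex.I / 2) * (2 * Complex.I) = 1 := by
      linear_combination -Complex.I_mul_I
    rw [e1, e2, one_smul, Matrix.fromBlocks_one]
  have hXV : X * V = 1 := mul_eq_one_comm.mp hVX
  -- key identity: A - conj A = 2i J
  have hY : Matrix.fromCols Z Zb *
      Matrix.fromBlocks ((Complex.I / 2) • 1) 0 0 ((-(Complex.I / 2)) • 1) * V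
      = (Complex.I / 2) • (Z * Zᴴ) + (-(Complex.I / 2)) • (Zb * Zᵀ) := by
    rw [Matrix.fromCols_mul_fromBlocks, hVdef, Matrix.fromCols_mul_fromRows]
    simp only [Matrix.mul_zero, zero_add, add_zero, Matrix.mul_smul, Matrix.mul_one,
      Matrix.smul_mul]
  have hJcY : Jc * ((Complex.I / 2) • (Z * Zᴴ) + (-(Complex.I / 2)) • (Zb * Zᵀ)) = 1 := by
    rw [← hY, ← Matrix.mul_assoc, ← Matrix.mul_assoc, ← hXdef]
    exact hXV
  have hYval : (Complex.I / 2) • (Z * Zᴴ) + (-(Complex.I / 2)) • (Zb * Zᵀ) = -Jc := by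
    have h := congrArg (fun M => (-Jc) * M) hJcY
    rw [← Matrix.mul_assoc, Matrix.neg_mul, hJJ, neg_neg, Matrix.one_mul,
      Matrix.mul_one] at h
    exact h
  have key : Z * Zᴴ - Zb * Zᵀ = (2 * Complex.I) • Jc := by
    have h := congrArg (fun M : Matrix (Fin d ⊕ Fin d) (Fin d ⊕ Fin d) ℂ =>
      (-(2 * Complex.I)) • M) hYval
    simp only [smul_add, smul_smul] at h
    have e1 : -(2 * Complex.I) * (Complex.I / 2) = 1 := by
      linear_combination -Complex.I_mul_I
    have e2 : -(2 * Complex.I) * -(Complex.I / 2) = -1 := by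
      linear_combination Complex.I_mul_I
    rw [e1, e2, one_smul, neg_one_smul] at h
    rw [sub_eq_add_neg, h, smul_neg, neg_smul, neg_neg]
  have hAb : Zb * Zᵀ = (Z * Zᴴ).map (starRingEnd ℂ) := by
    rw [Matrix.map_mul, hZhmap, ← hZbdef]
  rw [hAb] at key
  -- Im part
  have hIm : (Z * Zᴴ).map Complex.im = Jr := by
    ext i j
    have h := congrFun (congrFun key i) j
    simp only [Matrix.sub_apply, Matrix.map_apply, Matrix.smul_apply, smul_eq_mul] at h
    rw [Complex.sub_conj] at h
    have hj : Jc i j = ((Jr i j : ℝ) : ℂ) := by rw [← hJmap]; rfl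
    rw [hj] at h
    have h2 := congrArg Complex.im h
    simp only [Matrix.map_apply]
    simp at h2
    linarith
  -- Hermitian
  have hHerm : (Z * Zᴴ)ᴴ = Z * Zᴴ := by
    rw [Matrix.conjTranspose_mul, Matrix.conjTranspose_conjTranspose]
  have hResym : ((Z * Zᴴ).map Complex.re)ᵀ = (Z * Zᴴ).map Complex.re := by
    ext i j
    have h := congrFun (congrFun hHerm i) j
    have h2 := congrArg Complex.re h
    simpa [Matrix.conjTranspose_apply] using h2
  -- Positive definiteness
  have hPos : ((Z * Zᴴ).map Complex.re).PosDef := by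
    refine Matrix.PosDef.of_dotProduct_mulVec_pos ?_ ?_
    · ext i j
      have := congrFun (congrFun hResym i) j
      simpa [Matrix.conjTranspose_apply] using this
    · intro x hx
      set xc : (Fin d ⊕ Fin d) → ℂ := fun i => ((x i : ℝ) : ℂ) with hxcdef
      have hxc_star : star xc = xc := by
        funext i; simp [hxcdef, Complex.conj_ofReal]
      have hxc_ne : xc ≠ 0 := by
        intro h0
        apply hx
        funext i
        have := congrFun h0 i
        simp only [hxcdef, Pi.zero_apply] at this ⊢
        exact_mod_cast this
      have hv_ne : Zᴴ *ᵥ xc ≠ 0 := by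
        intro hv0
        apply hxc_ne
        have hZt0 : Zᵀ *ᵥ xc = 0 := by
          rw [Matrix.mulVec_transpose]
          have h := congrArg star hv0
          rw [Matrix.star_mulVec, hxc_star, Matrix.conjTranspose_conjTranspose] at h
          simpa using h
        have hVxc : V *ᵥ xc = 0 := by
          rw [hVdef, Matrix.fromRows_mulVec, hv0, hZt0]
          ext (i | i) <;> simp
        calc xc = (X * V) *ᵥ xc := by rw [hXV, Matrix.one_mulVec]
          _ = X *ᵥ (V *ᵥ xc) := by rw [← Matrix.mulVec_mulVec]
          _ = 0 := by rw [hVxc, Matrix.mulVec_zero]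
      have hsum : dotProduct x (((Z * Zᴴ).map Complex.re) *ᵥ x)
          = (dotProduct xc ((Z * Zᴴ) *ᵥ xc)).re := by
        simp only [dotProduct, Matrix.mulVec, Matrix.map_apply, hxcdef]
        rw [Complex.re_sum]
        refine Finset.sum_congr rfl fun i _ => ?_
        rw [Complex.re_ofReal_mul, Complex.re_sum]
        congr 1
        refine Finset.sum_congr rfl fun j _ => ?_
        rw [mul_comm ((Z * Zᴴ) i j) _, Complex.re_ofReal_mul, mul_comm]
      have hvf : dotProduct xc ((Z * Zᴴ) *ᵥ xc)
          = dotProduct (star (Zᴴ *ᵥ xc)) (Zᴴ *ᵥ xc) := by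
        rw [Matrix.star_mulVec, hxc_star, Matrix.conjTranspose_conjTranspose,
          ← Matrix.dotProduct_mulVec, Matrix.mulVec_mulVec]
      have hre2 : (dotProduct (star (Zᴴ *ᵥ xc)) (Zᴴ *ᵥ xc)).re
          = ∑ j, Complex.normSq ((Zᴴ *ᵥ xc) j) := by
        simp only [dotProduct, Pi.star_apply]
        rw [Complex.re_sum]
        refine Finset.sum_congr rfl fun j _ => ?_
        rw [Complex.star_def, mul_comm, Complex.mul_conj]
        simp
      obtain ⟨j0, hj0⟩ := Function.ne_iff.mp hv_ne
      have hpos : 0 < ∑ j, Complex.normSq ((Zᴴ *ᵥ xc) j) := by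
        refine Finset.sum_pos' (fun j _ => Complex.normSq_nonneg _) ⟨j0, Finset.mem_univ _, ?_⟩
        exact Complex.normSq_pos.mpr hj0
      have : star x = x := by funext i; simp
      rw [this, hsum, hvf, hre2]
      exact hpos
  -- Symplectic property
  have hAJA : (Z * Zᴴ) * Jc * (Z * Zᴴ) = (-(2 * Complex.I)) • (Z * Zᴴ) := by
    calc (Z * Zᴴ) * Jc * (Z * Zᴴ) = Z * (Zᴴ * Jc * Z) * Zᴴ := by
          simp only [Matrix.mul_assoc]
      _ = (-(2 * Complex.I)) • (Z * Zᴴ) := by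
          rw [h2', Matrix.mul_smul, Matrix.mul_one, Matrix.smul_mul]
  have hReC : ((Z * Zᴴ).map Complex.re).map Complex.ofReal
      = (Z * Zᴴ) - Complex.I • Jc := by
    ext i j
    simp only [Matrix.map_apply, Matrix.sub_apply, Matrix.smul_apply, smul_eq_mul]
    have him := congrFun (congrFun hIm i) j
    simp only [Matrix.map_apply] at him
    have hj : Jc i j = ((Jr i j : ℝ) : ℂ) := by rw [← hJmap]; rfl
    rw [hj, ← him]
    have h := Complex.re_add_im ((Z * Zᴴ) i j)
    linear_combination h
  have hB1 : ((Z * Zᴴ) - Complex.I • Jc) * Jc = (Z * Zᴴ) * Jc + Complex.I • 1 := by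
    rw [Matrix.sub_mul, Matrix.smul_mul, hJJ, smul_neg, sub_neg_eq_add]
  have hB2 : ((Z * Zᴴ) * Jc) * ((Z * Zᴴ) - Complex.I • Jc)
      = (-(Complex.I)) • (Z * Zᴴ) := by
    rw [Matrix.mul_sub, Matrix.mul_smul, hAJA, Matrix.mul_assoc, hJJ, mul_neg_one]
    module
  have hB3 : Complex.I • ((Z * Zᴴ) - Complex.I • Jc) = Complex.I • (Z * Zᴴ) + Jc := by
    rw [smul_sub, smul_smul, Complex.I_mul_I]
    module
  have hsympC : ((Z * Zᴴ) - Complex.I • Jc) * Jc * ((Z * Zᴴ) - Complex.I • Jc) = Jc := by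
    rw [hB1, Matrix.add_mul, hB2, Matrix.smul_mul, Matrix.one_mul, hB3]
    module
  refine ⟨hIm, hResym, hPos, ?_⟩
  rw [hResym]
  have hmapped : (((Z * Zᴴ).map Complex.re) * Jr * ((Z * Zᴴ).map Complex.re)).map
      Complex.ofReal = Jc := by
    rw [mapmulR, mapmulR, hJmap, hReC]
    exact hsympC
  have := hmapped
  rw [← hJmap] at this
  ext i j
  have h := congrFun (congrFun this i) j
  simp only [Matrix.map_apply] at h
  exact_mod_cast h
end
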